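/- If every graph in a family has a layered ℓ-separator for a fixed constant ℓ, then every n-vertex graph in the family has stack-number O(log n) and queue-number O(log n). -/

import Mathlib

/-- `lay` is a layering of `G`: every edge joins vertices in the same layer
or in consecutive layers. -/
def IsLayering {V : Type*} (G : SimpleGraph V) (lay : V → ℕ) : Prop :=
  ∀ u v : V, G.Adj u v →
    lay u = lay v ∨ lay u + 1 = lay v ∨ lay v + 1 = lay u

/-- `G` has a layered `ℓ`-separator with respect to the layering `lay`: every
subgraph `G'` of `G` contains a set `S` with at most `ℓ` vertices in each layer
such that every connected component of `G' − S` has at most `|V(G')| / 2`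
vertices. -/
def HasLayeredSeparator {V : Type*} (G : SimpleGraph V) (lay : V → ℕ) (ℓ : ℕ) : Prop :=
  ∀ G' : G.Subgraph, ∃ S ⊆ G'.verts,
    (∀ i : ℕ, (S ∩ {v | lay v = i}).ncard ≤ ℓ) ∧
    ∀ c : ((G'.deleteVerts S).coe).ConnectedComponent,
      2 * c.supp.ncard ≤ G'.verts.ncard

/-- `G` has a stack layout with `s` stacks: an injective position function on
the vertices and an assignment of the edges to `s` stacks such that no two
edges in the same stack cross. -/
def HasStackLayout {V : Type*} (G : SimpleGraph V) (s : ℕ) : Prop :=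
  ∃ (pos : V → ℕ) (f : Sym2 V → ℕ), Function.Injective pos ∧
    (∀ v w : V, G.Adj v w → f s(v, w) < s) ∧
    (∀ v w x y : V, G.Adj v w → G.Adj x y → f s(v, w) = f s(x, y) →
      ¬ (pos v < pos x ∧ pos x < pos w ∧ pos w < pos y))

/-- `G` has a queue layout with `q` queues: an injective position function on
the vertices and an assignment of the edges to `q` queues such that no two
edges in the same queue nest. -/
def HasQueueLayout {V : Type*} (G : SimpleGraph V) (q : ℕ) : Prop :=
  ∃ (pos : V → ℕ) (f : Sym2 V → ℕ), Function.Injective pos ∧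
    (∀ v w : V, G.Adj v w → f s(v, w) < q) ∧
    (∀ v w x y : V, G.Adj v w → G.Adj x y → f s(v, w) = f s(x, y) →
      ¬ (pos v < pos x ∧ pos x < pos y ∧ pos y < pos w))


/-- mixed radix decoding -/
lemma dmw_mr {M a a' r r' : ℕ} (h : a * M + r = a' * M + r') (hr : r < M) (hr' : r' < M) :
    a = a' ∧ r = r' := by
  rcases lt_trichotomy a a' with hlt | rfl | hlt
  · have h1 : (a + 1) * M ≤ a' * M := Nat.mul_le_mul_right M (by omega)
    have h2 : (a + 1) * M = a * M + M := by ring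
    omega
  · omega
  · have h1 : (a' + 1) * M ≤ a * M := Nat.mul_le_mul_right M (by omega)
    have h2 : (a' + 1) * M = a' * M + M := by ring
    omega

/-- lexicographic comparison is preserved by extensions, for same-length lists -/
lemma dmw_lex_ext : ∀ (p p' q q' : List ℕ), p.length = p'.length → p < p' →
    p <+: q → p' <+: q' → q < q' := by
  intro p
  induction p with
  | nil =>
    intro p' q q' hl h _ _
    rw [List.length_nil] at hl
    have : p' = [] := List.eq_nil_of_length_eq_zero hl.symm
    subst this
    exact absurd h (lt_irrefl _)
  | cons a tp ih =>
    intro p' q q' hl h hq hq'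
    match p', hl with
    | b :: tp', hl =>
      obtain ⟨r, rfl⟩ := hq
      obtain ⟨r', rfl⟩ := hq'
      replace h : List.Lex (· < ·) (a :: tp) (b :: tp') := h
      show List.Lex (· < ·) _ _
      cases h with
      | rel hab => exact List.Lex.rel hab
      | cons htail =>
        have := ih tp' (tp ++ r) (tp' ++ r') (by simpa using hl)
          htail (List.prefix_append _ _) (List.prefix_append _ _)
        exact List.Lex.cons this

/-- rank function for an injective key into a linear order -/
lemma dmw_rank {V : Type} [Fintype V] {β : Type*} [LinearOrder β] (k : V → β)
    (hk : Function.Injective k) :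
    ∃ rk : V → ℕ, (∀ v, rk v < Fintype.card V) ∧
      (∀ u v, k u < k v ↔ rk u < rk v) ∧ Function.Injective rk := by
  classical
  have mono : ∀ u v, k u < k v →
      (Finset.univ.filter (fun w => k w < k u)).card < (Finset.univ.filter (fun w => k w < k v)).card := by
    intro u v huv
    apply Finset.card_lt_card
    constructor
    · intro w hw
      simp only [Finset.mem_filter] at hw ⊢
      exact ⟨Finset.mem_univ _, hw.2.trans huv⟩
    · intro hsub
      have h1 : u ∈ Finset.univ.filter (fun w => k w < k v) := by
        simp only [Finset.mem_filter]; exact ⟨Finset.mem_univ _, huv⟩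
      have h2 := hsub h1
      simp only [Finset.mem_filter] at h2
      exact absurd h2.2 (lt_irrefl _)
  have iff_ : ∀ u v, k u < k v ↔
      (Finset.univ.filter (fun w => k w < k u)).card < (Finset.univ.filter (fun w => k w < k v)).card := by
    intro u v
    constructor
    · exact mono u v
    · intro h
      rcases lt_trichotomy (k u) (k v) with h' | h' | h'
      · exact h'
      · rw [hk h'] at h; exact absurd h (lt_irrefl _)
      · exact absurd (mono v u h') (by omega)
  refine ⟨fun v => (Finset.univ.filter (fun w => k w < k v)).card, ?_, ?_, ?_⟩
  · intro v
    dsimp only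
    have hsub : (Finset.univ.filter (fun w => k w < k v)) ⊆ Finset.univ.erase v := by
      intro w hw
      simp only [Finset.mem_filter] at hw
      exact Finset.mem_erase.mpr ⟨fun he => absurd (he ▸ hw.2) (lt_irrefl _), Finset.mem_univ _⟩
    have := Finset.card_le_card hsub
    have hcard : (Finset.univ.erase v).card = Fintype.card V - 1 := by
      rw [Finset.card_erase_of_mem (Finset.mem_univ v), Finset.card_univ]
    have hpos : 0 < Fintype.card V := Fintype.card_pos_iff.mpr ⟨v⟩
    omega
  · intro u v
    dsimp only
    exact iff_ u v
  · intro u v h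
    dsimp only at h
    by_contra hne
    rcases lt_trichotomy (k u) (k v) with h' | h' | h'
    · have := (iff_ u v).mp h'; omega
    · exact hne (hk h')
    · have := (iff_ v u).mp h'; omega

lemma dmw_exists_emb {V : Type} [Fintype V] (G : SimpleGraph V) (lay : V → ℕ) (ℓ : ℕ)
    (hsep : HasLayeredSeparator G lay ℓ) :
    ∀ (n : ℕ) (R : Set V), R.ncard ≤ n → ∃ e : V → List ℕ,
      (∀ v ∈ R, 2 ^ (e v).length ≤ R.ncard) ∧
      (∀ u ∈ R, ∀ v ∈ R, G.Adj u v → e u <+: e v ∨ e v <+: e u) ∧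
      (∀ (p : List ℕ) (i : ℕ), {v | v ∈ R ∧ e v = p ∧ lay v = i}.ncard ≤ ℓ) := by
  classical
  intro n
  induction n using Nat.strong_induction_on with
  | _ n ih =>
  intro R hR
  rcases R.eq_empty_or_nonempty with rfl | hne
  · refine ⟨fun _ => [], by simp, by simp, fun p i => ?_⟩
    have : {v | v ∈ (∅ : Set V) ∧ (fun _ => ([] : List ℕ)) v = p ∧ lay v = i} = ∅ := by
      ext v; simp
    simp [this]
  · have hRpos : 0 < R.ncard := (Set.ncard_pos R.toFinite).mpr hne
    have hn0 : n ≠ 0 := by omega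
    obtain ⟨S, hSsub, hSlay, hScomp⟩ := hsep ((⊤ : G.Subgraph).induce R)
    set Gd := ((⊤ : G.Subgraph).induce R).deleteVerts S with hGd
    set H := Gd.coe with hH
    -- membership helper
    have hmem : ∀ v : V, v ∈ R ∧ v ∉ S → v ∈ Gd.verts := by
      intro v hv
      rw [hGd, SimpleGraph.Subgraph.deleteVerts_verts, SimpleGraph.Subgraph.induce_verts]
      exact ⟨hv.1, hv.2⟩
    have hmemR : ∀ v : V, v ∈ Gd.verts → v ∈ R ∧ v ∉ S := by
      intro v hv
      rw [hGd, SimpleGraph.Subgraph.deleteVerts_verts, SimpleGraph.Subgraph.induce_verts] at hv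
      exact ⟨hv.1, hv.2⟩
    -- injection of components into ℕ
    have : Countable H.ConnectedComponent := Finite.to_countable
    obtain ⟨idx, hidx⟩ := (countable_iff_exists_injective H.ConnectedComponent).mp this
    -- region of a component
    set Rc : H.ConnectedComponent → Set V := fun c => Subtype.val '' c.supp with hRc
    have hRcncard : ∀ c, (Rc c).ncard = c.supp.ncard := fun c =>
      Set.ncard_image_of_injective _ Subtype.val_injective
    have hRchalf : ∀ c, 2 * (Rc c).ncard ≤ R.ncard := by
      intro c
      have h1 := hScomp c
      have h2 : ((⊤ : G.Subgraph).induce R).verts.ncard = R.ncard := by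
        rw [SimpleGraph.Subgraph.induce_verts]
      rw [hRcncard]
      omega
    -- apply induction hypothesis to each component region
    have hIH : ∀ c : H.ConnectedComponent, ∃ e : V → List ℕ,
        (∀ v ∈ Rc c, 2 ^ (e v).length ≤ (Rc c).ncard) ∧
        (∀ u ∈ Rc c, ∀ v ∈ Rc c, G.Adj u v → e u <+: e v ∨ e v <+: e u) ∧
        (∀ (p : List ℕ) (i : ℕ), {v | v ∈ Rc c ∧ e v = p ∧ lay v = i}.ncard ≤ ℓ) := by
      intro c
      apply ih (n / 2) (by omega)
      have := hRchalf c
      omega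
    choose eC hC1 hC2 hC3 using hIH
    -- the combined embedding
    set cm : ∀ v : V, v ∈ R ∧ v ∉ S → H.ConnectedComponent :=
      fun v hv => H.connectedComponentMk ⟨v, hmem v hv⟩ with hcm
    set e : V → List ℕ := fun v =>
      if h : v ∈ R ∧ v ∉ S then idx (cm v h) :: eC (cm v h) v else [] with he
    have eval : ∀ (v : V) (hv : v ∈ R ∧ v ∉ S), e v = idx (cm v hv) :: eC (cm v hv) v :=
      fun v hv => dif_pos hv
    have evalS : ∀ (v : V), v ∈ S → e v = [] := fun v hv => dif_neg (fun h => h.2 hv)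
    have hself : ∀ (v : V) (hv : v ∈ R ∧ v ∉ S), v ∈ Rc (cm v hv) := by
      intro v hv
      exact ⟨⟨v, hmem v hv⟩, (SimpleGraph.ConnectedComponent.mem_supp_iff _ _).mpr rfl, rfl⟩
    have hRcsub : ∀ c, Rc c ⊆ R := by
      intro c v hv
      obtain ⟨⟨w, hw⟩, _, rfl⟩ := hv
      exact (hmemR w hw).1
    -- adjacency within R \ S stays in one component
    have hadjcomp : ∀ (u v : V) (hu : u ∈ R ∧ u ∉ S) (hv : v ∈ R ∧ v ∉ S),
        G.Adj u v → cm u hu = cm v hv := by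
      intro u v hu hv hadj
      apply SimpleGraph.ConnectedComponent.sound
      apply SimpleGraph.Adj.reachable
      rw [hH, SimpleGraph.Subgraph.coe_adj]
      show Gd.Adj u v
      rw [hGd, SimpleGraph.Subgraph.deleteVerts_adj]
      refine ⟨by rw [SimpleGraph.Subgraph.induce_verts]; exact hu.1, hu.2,
        by rw [SimpleGraph.Subgraph.induce_verts]; exact hv.1, hv.2, ?_⟩
      rw [SimpleGraph.Subgraph.induce_adj]
      exact ⟨hu.1, hv.1, by rwa [SimpleGraph.Subgraph.top_adj]⟩
    refine ⟨e, ?_, ?_, ?_⟩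
    · -- size bound
      intro v hv
      by_cases hvS : v ∈ S
      · rw [evalS v hvS]
        simpa using (show 1 ≤ R.ncard by omega)
      · have hv' : v ∈ R ∧ v ∉ S := ⟨hv, hvS⟩
        rw [eval v hv', List.length_cons]
        have h1 := hC1 (cm v hv') v (hself v hv')
        have h2 := hRchalf (cm v hv')
        calc 2 ^ ((eC (cm v hv') v).length + 1) = 2 * 2 ^ (eC (cm v hv') v).length := by ring
        _ ≤ 2 * (Rc (cm v hv')).ncard := by omega
        _ ≤ R.ncard := h2
    · -- adjacency gives prefix relation
      intro u hu v hv hadj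
      by_cases huS : u ∈ S
      · left
        rw [evalS u huS]; exact List.nil_prefix
      by_cases hvS : v ∈ S
      · right
        rw [evalS v hvS]; exact List.nil_prefix
      · have hu' : u ∈ R ∧ u ∉ S := ⟨hu, huS⟩
        have hv' : v ∈ R ∧ v ∉ S := ⟨hv, hvS⟩
        have hc : cm u hu' = cm v hv' := hadjcomp u v hu' hv' hadj
        have heu : e u = idx (cm u hu') :: eC (cm u hu') u := eval u hu'
        have hev : e v = idx (cm u hu') :: eC (cm u hu') v := by
          have h := eval v hv'
          rw [← hc] at h
          exact h
        have := hC2 (cm u hu') u (hself u hu') v (hc ▸ hself v hv') hadj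
        rcases this with hpre | hpre
        · left; rw [heu, hev]; exact List.cons_prefix_cons.mpr ⟨rfl, hpre⟩
        · right; rw [heu, hev]; exact List.cons_prefix_cons.mpr ⟨rfl, hpre⟩
    · -- per-node per-layer bound
      intro p i
      match p with
      | [] =>
        have hsub : {v | v ∈ R ∧ e v = [] ∧ lay v = i} ⊆ S ∩ {v | lay v = i} := by
          intro v hv
          obtain ⟨hvR, hve, hvl⟩ := hv
          by_cases hvS : v ∈ S
          · exact ⟨hvS, hvl⟩
          · exfalso
            have h := eval v ⟨hvR, hvS⟩
            rw [hve] at h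
            exact List.cons_ne_nil _ _ h.symm
        exact le_trans (Set.ncard_le_ncard hsub (Set.toFinite _)) (hSlay i)
      | a :: p' =>
        by_cases hex : ∃ c : H.ConnectedComponent, idx c = a
        · obtain ⟨c, rfl⟩ := hex
          have hsub : {v | v ∈ R ∧ e v = idx c :: p' ∧ lay v = i} ⊆
              {v | v ∈ Rc c ∧ eC c v = p' ∧ lay v = i} := by
            intro v hv
            obtain ⟨hvR, hve, hvl⟩ := hv
            by_cases hvS : v ∈ S
            · exfalso
              have h := evalS v hvS
              rw [hve] at h
              exact List.cons_ne_nil _ _ h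
            · have hv' : v ∈ R ∧ v ∉ S := ⟨hvR, hvS⟩
              have hev : e v = idx (cm v hv') :: eC (cm v hv') v := eval v hv'
              rw [hve] at hev
              have h1 : idx c = idx (cm v hv') := (List.cons.injEq _ _ _ _ ▸ hev).1
              have h2 : cm v hv' = c := (hidx h1).symm
              refine ⟨h2 ▸ hself v hv', ?_, hvl⟩
              have h3 : p' = eC (cm v hv') v := (List.cons.injEq _ _ _ _ ▸ hev).2
              rw [h3, h2]
          exact le_trans (Set.ncard_le_ncard hsub (Set.toFinite _)) (hC3 c p' i)
        · have : {v | v ∈ R ∧ e v = a :: p' ∧ lay v = i} = ∅ := by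
            ext v
            simp only [Set.mem_setOf_eq, Set.mem_empty_iff_false, iff_false, not_and]
            intro hvR hve
            exfalso
            by_cases hvS : v ∈ S
            · have h := evalS v hvS
              rw [hve] at h
              exact List.cons_ne_nil _ _ h
            · have hv' : v ∈ R ∧ v ∉ S := ⟨hvR, hvS⟩
              have hev : e v = idx (cm v hv') :: eC (cm v hv') v := eval v hv'
              rw [hve] at hev
              exact hex ⟨cm v hv', ((List.cons.injEq _ _ _ _ ▸ hev).1).symm⟩
          rw [this]
          simp

lemma dmw_layouts {V : Type} [Fintype V] (G : SimpleGraph V) (lay : V → ℕ) (ℓ : ℕ)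
    (hlay : IsLayering G lay) (emb : V → List ℕ)
    (E1 : ∀ v, 2 ^ (emb v).length ≤ Fintype.card V)
    (E2 : ∀ u v, G.Adj u v → emb u <+: emb v ∨ emb v <+: emb u)
    (E3 : ∀ (p : List ℕ) (i : ℕ), {v | emb v = p ∧ lay v = i}.ncard ≤ ℓ) :
    HasStackLayout G (6 * ℓ * (Nat.log 2 (Fintype.card V) + 1)) ∧
    HasQueueLayout G (6 * ℓ * (Nat.log 2 (Fintype.card V) + 1)) := by
  classical
  rcases isEmpty_or_nonempty V with hV | hV
  · have hinj : Function.Injective (fun _ : V => 0) := fun a => (IsEmpty.false a).elim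
    have hadj : ∀ v w : V, G.Adj v w → False := fun v => (IsEmpty.false v).elim
    exact ⟨⟨fun _ => 0, fun _ => 0, hinj, fun v w h => (hadj v w h).elim,
        fun v w x y h => (hadj v w h).elim⟩,
      ⟨fun _ => 0, fun _ => 0, hinj, fun v w h => (hadj v w h).elim,
        fun v w x y h => (hadj v w h).elim⟩⟩
  set N := Fintype.card V with hN
  have hNpos : 0 < N := Fintype.card_pos
  set L := Nat.log 2 N with hL
  -- tie-breaking injection
  obtain ⟨tie, htie⟩ : ∃ t : V → ℕ, Function.Injective t :=
    ⟨fun v => (Fintype.equivFin V v : ℕ), fun a b h =>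
      (Fintype.equivFin V).injective (Fin.val_injective h)⟩
  -- the key
  set key : V → List ℕ := fun v => emb v ++ [tie v] with hkey
  have hkeyinj : Function.Injective key := by
    intro u v h
    simp only [hkey] at h
    have hlen : (emb u).length = (emb v).length := by
      have := congrArg List.length h
      simp only [List.length_append, List.length_singleton] at this
      omega
    obtain ⟨h1, h2⟩ := List.append_inj h hlen
    exact htie (by simpa using h2)
  obtain ⟨ek, hek_lt, hek_iff, hek_inj⟩ := dmw_rank key hkeyinj
  -- prefix into key
  have hkeycmp : ∀ (p p' : List ℕ) (c c' : V), p.length = p'.length → p < p' →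
      p <+: emb c → p' <+: emb c' → key c < key c' := by
    intro p p' c c' hl h hc hc'
    exact dmw_lex_ext p p' (key c) (key c') hl h
      (hc.trans (List.prefix_append _ _)) (hc'.trans (List.prefix_append _ _))
  -- the within-class index K
  set K : V → ℕ := fun u => {v | emb v = emb u ∧ lay v = lay u ∧ tie v < tie u}.ncard with hKdef
  have hK_lt : ∀ u, K u < ℓ := by
    intro u
    have hnm : u ∉ {v | emb v = emb u ∧ lay v = lay u ∧ tie v < tie u} := by
      intro h; exact absurd h.2.2 (lt_irrefl _)
    have hins := Set.ncard_insert_of_notMem hnm (Set.toFinite _)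
    have hsub : insert u {v | emb v = emb u ∧ lay v = lay u ∧ tie v < tie u} ⊆
        {v | emb v = emb u ∧ lay v = lay u} := by
      intro w hw
      rcases hw with rfl | hw
      · exact ⟨rfl, rfl⟩
      · exact ⟨hw.1, hw.2.1⟩
    have h1 := Set.ncard_le_ncard hsub (Set.toFinite _)
    have h2 := E3 (emb u) (lay u)
    simp only [hKdef]
    omega
  have hK_inj : ∀ u u', emb u = emb u' → lay u = lay u' → K u = K u' → u = u' := by
    have hmono : ∀ u u', emb u = emb u' → lay u = lay u' → tie u < tie u' → K u < K u' := by
      intro u u' he hl ht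
      have hnm : u ∉ {v | emb v = emb u ∧ lay v = lay u ∧ tie v < tie u} := by
        intro h; exact absurd h.2.2 (lt_irrefl _)
      have hins := Set.ncard_insert_of_notMem hnm (Set.toFinite _)
      have hsub : insert u {v | emb v = emb u ∧ lay v = lay u ∧ tie v < tie u} ⊆
          {v | emb v = emb u' ∧ lay v = lay u' ∧ tie v < tie u'} := by
        intro w hw
        rcases hw with rfl | hw
        · exact ⟨he, hl, ht⟩
        · exact ⟨hw.1.trans he, hw.2.1.trans hl, hw.2.2.trans ht⟩
      have h1 := Set.ncard_le_ncard hsub (Set.toFinite _)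
      simp only [hKdef]
      omega
    intro u u' he hl hk
    rcases lt_trichotomy (tie u) (tie u') with ht | ht | ht
    · exact absurd (hmono u u' he hl ht) (by omega)
    · exact htie ht
    · exact absurd (hmono u' u he.symm hl.symm ht) (by omega)
  -- depth
  set dd : V → ℕ := fun v => (emb v).length with hdd
  have hdd_le : ∀ v, dd v ≤ L := by
    intro v
    have hN0 : N ≠ 0 := by omega
    exact (Nat.le_log_iff_pow_le one_lt_two hN0).mpr (E1 v)
  -- prefix direction towards greater depth
  have hpref : ∀ a b, G.Adj a b → dd a ≤ dd b → emb a <+: emb b := by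
    intro a b h hle
    rcases E2 a b h with hp | hp
    · exact hp
    · have heq : emb b = emb a := hp.eq_of_length (le_antisymm hp.length_le hle)
      rw [heq]
  -- label and class function
  set lab : V → V → ℕ := fun u v =>
    ((dd u * 3 + (lay v + 1 - lay u)) * ℓ + K u) * 2 + lay u % 2 with hlab
  set F : V → V → ℕ := fun a b =>
    if dd a < dd b then lab a b
    else if dd b < dd a then lab b a
    else if tie a ≤ tie b then lab a b else lab b a with hF
  have hFsymm : ∀ a b, F a b = F b a := by
    intro a b
    simp only [hF]
    rcases lt_trichotomy (dd a) (dd b) with h | h | h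
    · rw [if_pos h, if_neg (show ¬ dd b < dd a by omega), if_pos h]
    · have h1 : ¬ dd a < dd b := by omega
      have h2 : ¬ dd b < dd a := by omega
      rw [if_neg h1, if_neg h2, if_neg h2, if_neg h1]
      rcases lt_trichotomy (tie a) (tie b) with ht | ht | ht
      · rw [if_pos (le_of_lt ht), if_neg (not_le.mpr ht)]
      · rw [htie ht]
      · rw [if_neg (not_le.mpr ht), if_pos (le_of_lt ht)]
    · rw [if_neg (show ¬ dd a < dd b by omega), if_pos h, if_pos h]
  -- delta relation from layering
  have hdelta : ∀ a b, G.Adj a b →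
      lay b + 1 = lay a + (lay b + 1 - lay a) ∧ lay b + 1 - lay a ≤ 2 := by
    intro a b h
    rcases hlay a b h with h' | h' | h' <;> omega
  -- anchor selection
  have hanchor : ∀ v w, G.Adj v w → ∃ a b,
      ((a = v ∧ b = w) ∨ (a = w ∧ b = v)) ∧ F v w = lab a b ∧ dd a ≤ dd b := by
    intro v w h
    rcases lt_trichotomy (dd v) (dd w) with h1 | h1 | h1
    · exact ⟨v, w, Or.inl ⟨rfl, rfl⟩, by simp only [hF]; rw [if_pos h1], le_of_lt h1⟩
    · by_cases h3 : tie v ≤ tie w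
      · exact ⟨v, w, Or.inl ⟨rfl, rfl⟩,
          by simp only [hF]
             rw [if_neg (show ¬ dd v < dd w by omega), if_neg (show ¬ dd w < dd v by omega),
               if_pos h3],
          le_of_eq h1⟩
      · exact ⟨w, v, Or.inr ⟨rfl, rfl⟩,
          by simp only [hF]
             rw [if_neg (show ¬ dd v < dd w by omega), if_neg (show ¬ dd w < dd v by omega),
               if_neg h3],
          le_of_eq h1.symm⟩
    · exact ⟨w, v, Or.inr ⟨rfl, rfl⟩,
        by simp only [hF]; rw [if_neg (show ¬ dd v < dd w by omega), if_pos h1], le_of_lt h1⟩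
  -- bound on labels
  have hlab_lt : ∀ a b, G.Adj a b → lab a b < 6 * ℓ * (L + 1) := by
    intro a b h
    obtain ⟨hd, hd2⟩ := hdelta a b h
    have hKa := hK_lt a
    have hda := hdd_le a
    simp only [hlab]
    have h1 : (dd a * 3 + (lay b + 1 - lay a) + 1) * ℓ =
        (dd a * 3 + (lay b + 1 - lay a)) * ℓ + ℓ := by ring
    have h2 : dd a * 3 + (lay b + 1 - lay a) + 1 ≤ 3 * (L + 1) := by omega
    have h3 : (dd a * 3 + (lay b + 1 - lay a) + 1) * ℓ ≤ 3 * (L + 1) * ℓ :=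
      Nat.mul_le_mul_right ℓ h2
    have h4 : 6 * ℓ * (L + 1) = (3 * (L + 1) * ℓ) * 2 := by ring
    have h5 : lay a % 2 < 2 := Nat.mod_lt _ (by omega)
    omega
  -- decoding equal labels
  have hdecode : ∀ a b a' b', G.Adj a b → G.Adj a' b' → lab a b = lab a' b' →
      dd a = dd a' ∧ (lay b + 1 - lay a) = (lay b' + 1 - lay a') ∧ K a = K a' ∧
      lay a % 2 = lay a' % 2 := by
    intro a b a' b' h h' heq
    obtain ⟨hda, hda2⟩ := hdelta a b h
    obtain ⟨hda', hda2'⟩ := hdelta a' b' h'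
    simp only [hlab] at heq
    have m2 : lay a % 2 < 2 := Nat.mod_lt _ (by omega)
    have m2' : lay a' % 2 < 2 := Nat.mod_lt _ (by omega)
    obtain ⟨e1, e2⟩ := dmw_mr heq m2 m2'
    have hKa := hK_lt a
    have hKa' := hK_lt a'
    obtain ⟨e3, e4⟩ := dmw_mr e1 hKa hKa'
    obtain ⟨e5, e6⟩ := dmw_mr e3 (by omega : lay b + 1 - lay a < 3)
      (by omega : lay b' + 1 - lay a' < 3)
    · exact ⟨e5, e6, e4, e2⟩
  -- position function packages
  have hmonoq : ∀ u v : V, lay u < lay v → lay u * N + ek u < lay v * N + ek v := by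
    intro u v h
    have h1 : (lay u + 1) * N ≤ lay v * N := Nat.mul_le_mul_right N (by omega)
    have h2 : (lay u + 1) * N = lay u * N + N := by ring
    have h3 := hek_lt u
    omega
  have hpq : ∃ pq : V → ℕ, Function.Injective pq ∧
      (∀ u v, pq u < pq v → lay u ≤ lay v) ∧
      (∀ u v, lay u = lay v → (pq u < pq v ↔ key u < key v)) := by
    have hlayle : ∀ u v : V, lay u * N + ek u < lay v * N + ek v → lay u ≤ lay v := by
      intro u v h
      by_contra hc
      push_neg at hc
      have := hmonoq v u hc
      omega
    refine ⟨fun v => lay v * N + ek v, ?_, ?_, ?_⟩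
    · intro u v h
      dsimp only at h
      have hl : lay u = lay v := by
        rcases lt_trichotomy (lay u) (lay v) with hc | hc | hc
        · have := hmonoq u v hc; omega
        · exact hc
        · have := hmonoq v u hc; omega
      have hekeq : ek u = ek v := by rw [hl] at h; omega
      exact hek_inj hekeq
    · intro u v h
      dsimp only at h
      exact hlayle u v h
    · intro u v h
      dsimp only
      rw [h]
      constructor
      · intro hlt
        exact (hek_iff u v).mpr (by omega)
      · intro hlt
        have := (hek_iff u v).mp hlt
        omega
  obtain ⟨pq, hpq_inj, hpq_lay, hpq_same⟩ := hpq
  have hps : ∃ ps : V → ℕ, Function.Injective ps ∧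
      (∀ u v, ps u < ps v → lay u ≤ lay v) ∧
      (∀ u v, lay u = lay v → lay u % 2 = 0 → (ps u < ps v ↔ key u < key v)) ∧
      (∀ u v, lay u = lay v → lay u % 2 = 1 → (ps u < ps v ↔ key v < key u)) := by
    have hrs_lt : ∀ v : V, (if lay v % 2 = 0 then ek v else N - 1 - ek v) < N := by
      intro v
      have := hek_lt v
      split <;> omega
    have hmonos : ∀ u v : V, lay u < lay v →
        lay u * N + (if lay u % 2 = 0 then ek u else N - 1 - ek u) <
        lay v * N + (if lay v % 2 = 0 then ek v else N - 1 - ek v) := by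
      intro u v h
      have h1 : (lay u + 1) * N ≤ lay v * N := Nat.mul_le_mul_right N (by omega)
      have h2 : (lay u + 1) * N = lay u * N + N := by ring
      have h3 := hrs_lt u
      have h4 := hrs_lt v
      omega
    have hlayle : ∀ u v : V,
        lay u * N + (if lay u % 2 = 0 then ek u else N - 1 - ek u) <
        lay v * N + (if lay v % 2 = 0 then ek v else N - 1 - ek v) → lay u ≤ lay v := by
      intro u v h
      by_contra hc
      push_neg at hc
      have := hmonos v u hc
      omega
    refine ⟨fun v => lay v * N + (if lay v % 2 = 0 then ek v else N - 1 - ek v), ?_, ?_, ?_, ?_⟩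
    · intro u v h
      dsimp only at h
      have hl : lay u = lay v := by
        rcases lt_trichotomy (lay u) (lay v) with hc | hc | hc
        · have := hmonos u v hc; omega
        · exact hc
        · have := hmonos v u hc; omega
      have hekeq : ek u = ek v := by
        rw [hl] at h
        have h1 := hek_lt u
        have h2 := hek_lt v
        by_cases h0 : lay v % 2 = 0
        · rw [if_pos h0, if_pos h0] at h; omega
        · rw [if_neg h0, if_neg h0] at h; omega
      exact hek_inj hekeq
    · intro u v h
      dsimp only at h
      exact hlayle u v h
    · intro u v h h0
      dsimp only
      have h0' : lay v % 2 = 0 := h ▸ h0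
      rw [h, if_pos h0', if_pos h0']
      constructor
      · intro hlt
        exact (hek_iff u v).mpr (by omega)
      · intro hlt
        have := (hek_iff u v).mp hlt
        omega
    · intro u v h h0
      dsimp only
      have h0' : lay v % 2 = 1 := h ▸ h0
      rw [h, if_neg (by omega), if_neg (by omega)]
      have h1 := hek_lt u
      have h2 := hek_lt v
      constructor
      · intro hlt
        exact (hek_iff v u).mpr (by omega)
      · intro hlt
        have := (hek_iff v u).mp hlt
        omega
  obtain ⟨ps, hps_inj, hps_lay, hps_even, hps_odd⟩ := hps
  -- class interface: all structural facts shared by two edges with equal F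
  have hclass : ∀ v w x y, G.Adj v w → G.Adj x y → F v w = F x y →
      ∃ a1 b1 a2 b2, ((a1 = v ∧ b1 = w) ∨ (a1 = w ∧ b1 = v)) ∧
        ((a2 = x ∧ b2 = y) ∨ (a2 = y ∧ b2 = x)) ∧
        emb a1 <+: emb b1 ∧ emb a2 <+: emb b2 ∧
        (emb a1).length = (emb a2).length ∧
        lay b1 + 1 = lay a1 + (lay b1 + 1 - lay a1) ∧
        lay b2 + 1 = lay a2 + (lay b1 + 1 - lay a1) ∧
        lay b1 + 1 - lay a1 ≤ 2 ∧
        (emb a1 = emb a2 → lay a1 = lay a2 → a1 = a2) ∧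
        lay a1 % 2 = lay a2 % 2 := by
    intro v w x y hvw hxy hfeq
    obtain ⟨a1, b1, ho1, hF1, hdd1⟩ := hanchor v w hvw
    obtain ⟨a2, b2, ho2, hF2, hdd2⟩ := hanchor x y hxy
    have hab1 : G.Adj a1 b1 := by
      rcases ho1 with ⟨rfl, rfl⟩ | ⟨rfl, rfl⟩
      · exact hvw
      · exact hvw.symm
    have hab2 : G.Adj a2 b2 := by
      rcases ho2 with ⟨rfl, rfl⟩ | ⟨rfl, rfl⟩
      · exact hxy
      · exact hxy.symm
    have hlabeq : lab a1 b1 = lab a2 b2 := by rw [← hF1, ← hF2, hfeq]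
    obtain ⟨hd, hδ, hK, hpar⟩ := hdecode a1 b1 a2 b2 hab1 hab2 hlabeq
    obtain ⟨hd1, hd1le⟩ := hdelta a1 b1 hab1
    obtain ⟨hd2, _⟩ := hdelta a2 b2 hab2
    refine ⟨a1, b1, a2, b2, ho1, ho2, hpref a1 b1 hab1 hdd1, hpref a2 b2 hab2 hdd2,
      hd, hd1, by rw [hδ]; exact hd2, hd1le, ?_, hpar⟩
    intro he hl
    exact hK_inj a1 a2 he hl (by exact hK)
  -- THE NO-CROSS LEMMA (stack layout, alternating order ps)
  have nocross : ∀ v w x y, G.Adj v w → G.Adj x y → F v w = F x y →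
      ¬ (ps v < ps x ∧ ps x < ps w ∧ ps w < ps y) := by
    intro v w x y hvw hxy hfeq
    rintro ⟨h1, h2, h3⟩
    obtain ⟨a1, b1, a2, b2, ho1, ho2, hp1, hp2, hlen, hq1, hq2, hdle, hsamev, hpar⟩ :=
      hclass v w x y hvw hxy hfeq
    have c1 : lay v ≤ lay x := hps_lay _ _ h1
    have c2 : lay x ≤ lay w := hps_lay _ _ h2
    have c3 : lay w ≤ lay y := hps_lay _ _ h3
    -- generic contradiction when the two anchors coincide
    have hcoincide : a1 = a2 → False := by
      intro heqa
      have e1 : ps a1 = ps v ∨ ps a1 = ps w := by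
        rcases ho1 with ⟨h, _⟩ | ⟨h, _⟩
        · exact Or.inl (by rw [h])
        · exact Or.inr (by rw [h])
      have e2 : ps a2 = ps x ∨ ps a2 = ps y := by
        rcases ho2 with ⟨h, _⟩ | ⟨h, _⟩
        · exact Or.inl (by rw [h])
        · exact Or.inr (by rw [h])
      have e3 : ps a1 = ps a2 := by rw [heqa]
      rcases e1 with e1 | e1 <;> rcases e2 with e2 | e2 <;> omega
    have hδc : lay b1 + 1 - lay a1 = 0 ∨ lay b1 + 1 - lay a1 = 1 ∨
        lay b1 + 1 - lay a1 = 2 := by omega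
    rcases hδc with hδ0 | hδ1 | hδ2
    -- CASE δ = 0 : edge goes from anchor down one layer
    · have hb1 : lay a1 = lay b1 + 1 := by omega
      have hb2 : lay a2 = lay b2 + 1 := by omega
      obtain ⟨hva, hwb⟩ : v = b1 ∧ w = a1 := by
        rcases ho1 with ⟨h, h'⟩ | ⟨h, h'⟩
        · exfalso
          have hvw' : lay v ≤ lay w := le_trans c1 c2
          rw [← h, ← h'] at hvw'
          omega
        · exact ⟨h'.symm, h.symm⟩
      obtain ⟨hxa, hyb⟩ : x = b2 ∧ y = a2 := by
        rcases ho2 with ⟨h, h'⟩ | ⟨h, h'⟩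
        · exfalso
          have hxy' : lay x ≤ lay y := le_trans c2 c3
          rw [← h, ← h'] at hxy'
          omega
        · exact ⟨h'.symm, h.symm⟩
      rw [hva, hxa] at h1
      rw [hxa, hwb] at h2
      rw [hwb, hyb] at h3
      -- layer equalities
      have l1 : lay b1 ≤ lay b2 := hps_lay _ _ h1
      have l2 : lay b2 ≤ lay a1 := hps_lay _ _ h2
      have l3 : lay a1 ≤ lay a2 := hps_lay _ _ h3
      have hjj : lay a1 = lay a2 := by omega
      have hbb : lay b1 = lay b2 := by omega
      rcases lt_trichotomy (emb a1) (emb a2) with hlt | heq | hgt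
      · have kb : key b1 < key b2 := hkeycmp _ _ b1 b2 hlen hlt hp1 hp2
        have ka : key a1 < key a2 := hkeycmp _ _ a1 a2 hlen hlt List.prefix_rfl List.prefix_rfl
        rcases Nat.mod_two_eq_zero_or_one (lay a1) with hpar0 | hpar1
        · exact absurd ((hps_odd b1 b2 hbb (by omega)).mp h1) (lt_asymm kb)
        · exact absurd ((hps_odd a1 a2 hjj (by omega)).mp h3) (lt_asymm ka)
      · exact hcoincide (hsamev heq hjj)
      · have kb : key b2 < key b1 := hkeycmp _ _ b2 b1 hlen.symm hgt hp2 hp1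
        have ka : key a2 < key a1 := hkeycmp _ _ a2 a1 hlen.symm hgt List.prefix_rfl List.prefix_rfl
        rcases Nat.mod_two_eq_zero_or_one (lay a1) with hpar0 | hpar1
        · exact absurd ((hps_even a1 a2 hjj (by omega)).mp h3) (lt_asymm ka)
        · exact absurd ((hps_even b1 b2 hbb (by omega)).mp h1) (lt_asymm kb)
    -- CASE δ = 1 : edge within one layer
    · have hb1 : lay b1 = lay a1 := by omega
      have hb2 : lay b2 = lay a2 := by omega
      have hlv : lay v = lay a1 ∧ lay w = lay a1 := by
        rcases ho1 with ⟨h, h'⟩ | ⟨h, h'⟩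
        · exact ⟨by rw [← h], by rw [← h']; exact hb1⟩
        · exact ⟨by rw [← h']; exact hb1, by rw [← h]⟩
      have hlx : lay x = lay a2 ∧ lay y = lay a2 := by
        rcases ho2 with ⟨h, h'⟩ | ⟨h, h'⟩
        · exact ⟨by rw [← h], by rw [← h']; exact hb2⟩
        · exact ⟨by rw [← h']; exact hb2, by rw [← h]⟩
      have hjj : lay a1 = lay a2 := by omega
      have hpv : emb a1 <+: emb v := by
        rcases ho1 with ⟨h, _⟩ | ⟨_, h⟩
        · rw [h]
        · rw [← h]; exact hp1
      have hpw : emb a1 <+: emb w := by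
        rcases ho1 with ⟨_, h⟩ | ⟨h, _⟩
        · rw [← h]; exact hp1
        · rw [h]
      have hpx : emb a2 <+: emb x := by
        rcases ho2 with ⟨h, _⟩ | ⟨_, h⟩
        · rw [h]
        · rw [← h]; exact hp2
      have hpy : emb a2 <+: emb y := by
        rcases ho2 with ⟨_, h⟩ | ⟨h, _⟩
        · rw [← h]; exact hp2
        · rw [h]
      rcases lt_trichotomy (emb a1) (emb a2) with hlt | heq | hgt
      · have kwx : key w < key x := hkeycmp _ _ w x hlen hlt hpw hpx
        have kvx : key v < key x := hkeycmp _ _ v x hlen hlt hpv hpx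
        rcases Nat.mod_two_eq_zero_or_one (lay a1) with hpar0 | hpar1
        · have := (hps_even w x (by omega) (by omega)).mpr kwx
          omega
        · have := (hps_odd x v (by omega) (by omega)).mpr kvx
          omega
      · exact hcoincide (hsamev heq hjj)
      · have kxv : key x < key v := hkeycmp _ _ x v hlen.symm hgt hpx hpv
        have kxw : key x < key w := hkeycmp _ _ x w hlen.symm hgt hpx hpw
        rcases Nat.mod_two_eq_zero_or_one (lay a1) with hpar0 | hpar1
        · have := (hps_even x v (by omega) (by omega)).mpr kxv
          omega
        · have := (hps_odd w x (by omega) (by omega)).mpr kxw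
          omega
    -- CASE δ = 2 : edge goes from anchor up one layer
    · have hb1 : lay b1 = lay a1 + 1 := by omega
      have hb2 : lay b2 = lay a2 + 1 := by omega
      obtain ⟨hva, hwb⟩ : v = a1 ∧ w = b1 := by
        rcases ho1 with ⟨h, h'⟩ | ⟨h, h'⟩
        · exact ⟨h.symm, h'.symm⟩
        · exfalso
          have hvw' : lay v ≤ lay w := le_trans c1 c2
          rw [← h', ← h] at hvw'
          omega
      obtain ⟨hxa, hyb⟩ : x = a2 ∧ y = b2 := by
        rcases ho2 with ⟨h, h'⟩ | ⟨h, h'⟩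
        · exact ⟨h.symm, h'.symm⟩
        · exfalso
          have hxy' : lay x ≤ lay y := le_trans c2 c3
          rw [← h', ← h] at hxy'
          omega
      rw [hva, hxa] at h1
      rw [hxa, hwb] at h2
      rw [hwb, hyb] at h3
      have l1 : lay a1 ≤ lay a2 := hps_lay _ _ h1
      have l2 : lay a2 ≤ lay b1 := hps_lay _ _ h2
      have hjj : lay a1 = lay a2 := by omega
      have hbb : lay b1 = lay b2 := by omega
      rcases lt_trichotomy (emb a1) (emb a2) with hlt | heq | hgt
      · have kb : key b1 < key b2 := hkeycmp _ _ b1 b2 hlen hlt hp1 hp2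
        have ka : key a1 < key a2 := hkeycmp _ _ a1 a2 hlen hlt List.prefix_rfl List.prefix_rfl
        rcases Nat.mod_two_eq_zero_or_one (lay a1) with hpar0 | hpar1
        · exact absurd ((hps_odd b1 b2 hbb (by omega)).mp h3) (lt_asymm kb)
        · exact absurd ((hps_odd a1 a2 hjj (by omega)).mp h1) (lt_asymm ka)
      · exact hcoincide (hsamev heq hjj)
      · have kb : key b2 < key b1 := hkeycmp _ _ b2 b1 hlen.symm hgt hp2 hp1
        have ka : key a2 < key a1 := hkeycmp _ _ a2 a1 hlen.symm hgt List.prefix_rfl List.prefix_rfl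
        rcases Nat.mod_two_eq_zero_or_one (lay a1) with hpar0 | hpar1
        · exact absurd ((hps_even a1 a2 hjj (by omega)).mp h1) (lt_asymm ka)
        · exact absurd ((hps_even b1 b2 hbb (by omega)).mp h3) (lt_asymm kb)
  -- THE NO-NEST LEMMA (queue layout, plain order pq)
  have nonest : ∀ v w x y, G.Adj v w → G.Adj x y → F v w = F x y →
      ¬ (pq v < pq x ∧ pq x < pq y ∧ pq y < pq w) := by
    intro v w x y hvw hxy hfeq
    rintro ⟨h1, h2, h3⟩
    obtain ⟨a1, b1, a2, b2, ho1, ho2, hp1, hp2, hlen, hq1, hq2, hdle, hsamev, hpar⟩ :=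
      hclass v w x y hvw hxy hfeq
    have c1 : lay v ≤ lay x := hpq_lay _ _ h1
    have c2 : lay x ≤ lay y := hpq_lay _ _ h2
    have c3 : lay y ≤ lay w := hpq_lay _ _ h3
    have hcoincide : a1 = a2 → False := by
      intro heqa
      have e1 : pq a1 = pq v ∨ pq a1 = pq w := by
        rcases ho1 with ⟨h, _⟩ | ⟨h, _⟩
        · exact Or.inl (by rw [h])
        · exact Or.inr (by rw [h])
      have e2 : pq a2 = pq x ∨ pq a2 = pq y := by
        rcases ho2 with ⟨h, _⟩ | ⟨h, _⟩
        · exact Or.inl (by rw [h])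
        · exact Or.inr (by rw [h])
      have e3 : pq a1 = pq a2 := by rw [heqa]
      rcases e1 with e1 | e1 <;> rcases e2 with e2 | e2 <;> omega
    have hδc : lay b1 + 1 - lay a1 = 0 ∨ lay b1 + 1 - lay a1 = 1 ∨
        lay b1 + 1 - lay a1 = 2 := by omega
    rcases hδc with hδ0 | hδ1 | hδ2
    -- δ = 0
    · have hb1 : lay a1 = lay b1 + 1 := by omega
      have hb2 : lay a2 = lay b2 + 1 := by omega
      obtain ⟨hva, hwb⟩ : v = b1 ∧ w = a1 := by
        rcases ho1 with ⟨h, h'⟩ | ⟨h, h'⟩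
        · exfalso
          have hvw' : lay v ≤ lay w := le_trans c1 (le_trans c2 c3)
          rw [← h, ← h'] at hvw'
          omega
        · exact ⟨h'.symm, h.symm⟩
      obtain ⟨hxa, hyb⟩ : x = b2 ∧ y = a2 := by
        rcases ho2 with ⟨h, h'⟩ | ⟨h, h'⟩
        · exfalso
          rw [← h, ← h'] at c2
          omega
        · exact ⟨h'.symm, h.symm⟩
      rw [hva, hxa] at h1
      rw [hxa, hyb] at h2
      rw [hyb, hwb] at h3
      have l1 : lay b1 ≤ lay b2 := hpq_lay _ _ h1
      have l3 : lay a2 ≤ lay a1 := hpq_lay _ _ h3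
      have hjj : lay a1 = lay a2 := by omega
      rcases lt_trichotomy (emb a1) (emb a2) with hlt | heq | hgt
      · have ka : key a1 < key a2 := hkeycmp _ _ a1 a2 hlen hlt List.prefix_rfl List.prefix_rfl
        have := (hpq_same a1 a2 hjj).mpr ka
        omega
      · exact hcoincide (hsamev heq hjj)
      · have kb : key b2 < key b1 := hkeycmp _ _ b2 b1 hlen.symm hgt hp2 hp1
        have := (hpq_same b2 b1 (by omega)).mpr kb
        omega
    -- δ = 1
    · have hb1 : lay b1 = lay a1 := by omega
      have hb2 : lay b2 = lay a2 := by omega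
      have hlv : lay v = lay a1 ∧ lay w = lay a1 := by
        rcases ho1 with ⟨h, h'⟩ | ⟨h, h'⟩
        · exact ⟨by rw [← h], by rw [← h']; exact hb1⟩
        · exact ⟨by rw [← h']; exact hb1, by rw [← h]⟩
      have hlx : lay x = lay a2 ∧ lay y = lay a2 := by
        rcases ho2 with ⟨h, h'⟩ | ⟨h, h'⟩
        · exact ⟨by rw [← h], by rw [← h']; exact hb2⟩
        · exact ⟨by rw [← h']; exact hb2, by rw [← h]⟩
      have hjj : lay a1 = lay a2 := by omega
      have hpv : emb a1 <+: emb v := by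
        rcases ho1 with ⟨h, _⟩ | ⟨_, h⟩
        · rw [h]
        · rw [← h]; exact hp1
      have hpw : emb a1 <+: emb w := by
        rcases ho1 with ⟨_, h⟩ | ⟨h, _⟩
        · rw [← h]; exact hp1
        · rw [h]
      have hpx : emb a2 <+: emb x := by
        rcases ho2 with ⟨h, _⟩ | ⟨_, h⟩
        · rw [h]
        · rw [← h]; exact hp2
      have hpy : emb a2 <+: emb y := by
        rcases ho2 with ⟨_, h⟩ | ⟨h, _⟩
        · rw [← h]; exact hp2
        · rw [h]
      rcases lt_trichotomy (emb a1) (emb a2) with hlt | heq | hgt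
      · have kwx : key w < key x := hkeycmp _ _ w x hlen hlt hpw hpx
        have := (hpq_same w x (by omega)).mpr kwx
        omega
      · exact hcoincide (hsamev heq hjj)
      · have kxv : key x < key v := hkeycmp _ _ x v hlen.symm hgt hpx hpv
        have := (hpq_same x v (by omega)).mpr kxv
        omega
    -- δ = 2
    · have hb1 : lay b1 = lay a1 + 1 := by omega
      have hb2 : lay b2 = lay a2 + 1 := by omega
      obtain ⟨hva, hwb⟩ : v = a1 ∧ w = b1 := by
        rcases ho1 with ⟨h, h'⟩ | ⟨h, h'⟩
        · exact ⟨h.symm, h'.symm⟩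
        · exfalso
          have hvw' : lay v ≤ lay w := le_trans c1 (le_trans c2 c3)
          rw [← h', ← h] at hvw'
          omega
      obtain ⟨hxa, hyb⟩ : x = a2 ∧ y = b2 := by
        rcases ho2 with ⟨h, h'⟩ | ⟨h, h'⟩
        · exact ⟨h.symm, h'.symm⟩
        · exfalso
          rw [← h', ← h] at c2
          omega
      rw [hva, hxa] at h1
      rw [hxa, hyb] at h2
      rw [hyb, hwb] at h3
      have l1 : lay a1 ≤ lay a2 := hpq_lay _ _ h1
      have l3 : lay b2 ≤ lay b1 := hpq_lay _ _ h3
      have hjj : lay a1 = lay a2 := by omega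
      rcases lt_trichotomy (emb a1) (emb a2) with hlt | heq | hgt
      · have kb : key b1 < key b2 := hkeycmp _ _ b1 b2 hlen hlt hp1 hp2
        have := (hpq_same b1 b2 (by omega)).mpr kb
        omega
      · exact hcoincide (hsamev heq hjj)
      · have ka : key a2 < key a1 := hkeycmp _ _ a2 a1 hlen.symm hgt List.prefix_rfl List.prefix_rfl
        have := (hpq_same a2 a1 hjj.symm).mpr ka
        omega
  -- assemble the two layouts
  have hfbound : ∀ v' w', G.Adj v' w' → F v' w' < 6 * ℓ * (L + 1) := by
    intro v' w' h
    obtain ⟨a, b, ho, hFe, _⟩ := hanchor v' w' h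
    have hab : G.Adj a b := by
      rcases ho with ⟨rfl, rfl⟩ | ⟨rfl, rfl⟩
      · exact h
      · exact h.symm
    rw [hFe]
    exact hlab_lt a b hab
  constructor
  · exact ⟨ps, Sym2.lift ⟨F, hFsymm⟩, hps_inj,
      fun v w h => by rw [Sym2.lift_mk]; exact hfbound v w h,
      fun v w x y hvw hxy hfe => by
        rw [Sym2.lift_mk, Sym2.lift_mk] at hfe
        exact nocross v w x y hvw hxy hfe⟩
  · exact ⟨pq, Sym2.lift ⟨F, hFsymm⟩, hpq_inj,
      fun v w h => by rw [Sym2.lift_mk]; exact hfbound v w h,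
      fun v w x y hvw hxy hfe => by
        rw [Sym2.lift_mk, Sym2.lift_mk] at hfe
        exact nonest v w x y hvw hxy hfe⟩

/-- If every graph in a family has a layered `ℓ`-separator for a fixed `ℓ`,
then every `n`-vertex graph in the family has stack-number `O(log n)` and
queue-number `O(log n)`. -/
theorem layered_separator_log_stack_and_queue (ℓ : ℕ) :
    ∃ C : ℝ, 0 ≤ C ∧
      ∀ (V : Type) [Fintype V] (G : SimpleGraph V) (lay : V → ℕ),
        IsLayering G lay → HasLayeredSeparator G lay ℓ →
        (∃ s : ℕ, HasStackLayout G s ∧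
          (s : ℝ) ≤ C * Real.logb 2 (Fintype.card V)) ∧
        (∃ q : ℕ, HasQueueLayout G q ∧
          (q : ℝ) ≤ C * Real.logb 2 (Fintype.card V)) := by
  classical
  refine ⟨12 * ℓ + 1, by positivity, ?_⟩
  intro V _ G lay hlay hsep
  by_cases hN1 : Fintype.card V ≤ 1
  · -- trivial case : at most one vertex, no edges
    have hnoadj : ∀ v w : V, G.Adj v w → False := by
      intro v w h
      have := Fintype.card_le_one_iff.mp hN1 v w
      exact G.irrefl (this ▸ h)
    have hinj : Function.Injective (fun v : V => (Fintype.equivFin V v : ℕ)) :=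
      fun a b h => (Fintype.equivFin V).injective (Fin.val_injective h)
    have hlb : (0 : ℝ) ≤ (12 * ℓ + 1 : ℝ) * Real.logb 2 (Fintype.card V) := by
      rcases Nat.le_one_iff_eq_zero_or_eq_one.mp hN1 with h | h <;>
        rw [h] <;> simp [Real.logb_zero, Real.logb_one]
    refine ⟨⟨0, ⟨fun v => (Fintype.equivFin V v : ℕ), fun _ => 0, hinj,
        fun v w h => (hnoadj v w h).elim, fun v w x y h => (hnoadj v w h).elim⟩,
        by simpa using hlb⟩,
      ⟨0, ⟨fun v => (Fintype.equivFin V v : ℕ), fun _ => 0, hinj,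
        fun v w h => (hnoadj v w h).elim, fun v w x y h => (hnoadj v w h).elim⟩,
        by simpa using hlb⟩⟩
  · -- main case : at least two vertices
    push_neg at hN1
    obtain ⟨e, he1, he2, he3⟩ := dmw_exists_emb G lay ℓ hsep (Fintype.card V) Set.univ
      (by rw [Set.ncard_univ, Nat.card_eq_fintype_card])
    have E1 : ∀ v, 2 ^ (e v).length ≤ Fintype.card V := by
      intro v
      have := he1 v (Set.mem_univ v)
      rwa [Set.ncard_univ, Nat.card_eq_fintype_card] at this
    have E2 : ∀ u v, G.Adj u v → e u <+: e v ∨ e v <+: e u :=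
      fun u v h => he2 u trivial v trivial h
    have E3 : ∀ (p : List ℕ) (i : ℕ), {v | e v = p ∧ lay v = i}.ncard ≤ ℓ := by
      intro p i
      have h := he3 p i
      have hseteq : {v | v ∈ (Set.univ : Set V) ∧ e v = p ∧ lay v = i} =
          {v | e v = p ∧ lay v = i} := by
        ext v; simp
      rwa [hseteq] at h
    obtain ⟨hs, hq⟩ := dmw_layouts G lay ℓ hlay e E1 E2 E3
    have hL1 : 1 ≤ Nat.log 2 (Fintype.card V) := Nat.log_pos one_lt_two (by omega)
    have hlogb_nonneg : (0 : ℝ) ≤ Real.logb 2 (Fintype.card V) := by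
      apply Real.logb_nonneg one_lt_two
      exact_mod_cast (by omega : 1 ≤ Fintype.card V)
    have hnat : 6 * ℓ * (Nat.log 2 (Fintype.card V) + 1) ≤
        12 * ℓ * Nat.log 2 (Fintype.card V) := by
      calc 6 * ℓ * (Nat.log 2 (Fintype.card V) + 1)
          ≤ 6 * ℓ * (2 * Nat.log 2 (Fintype.card V)) :=
            Nat.mul_le_mul_left _ (by omega)
        _ = 12 * ℓ * Nat.log 2 (Fintype.card V) := by ring
    have hbound : ((6 * ℓ * (Nat.log 2 (Fintype.card V) + 1) : ℕ) : ℝ) ≤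
        (12 * ℓ + 1 : ℝ) * Real.logb 2 (Fintype.card V) := by
      have hcast : ((6 * ℓ * (Nat.log 2 (Fintype.card V) + 1) : ℕ) : ℝ) ≤
          ((12 * ℓ * Nat.log 2 (Fintype.card V) : ℕ) : ℝ) := Nat.cast_le.mpr hnat
      have hlog : ((Nat.log 2 (Fintype.card V) : ℕ) : ℝ) ≤ Real.logb 2 (Fintype.card V) := by
        exact_mod_cast Real.natLog_le_logb (Fintype.card V) 2
      calc ((6 * ℓ * (Nat.log 2 (Fintype.card V) + 1) : ℕ) : ℝ)
          ≤ ((12 * ℓ * Nat.log 2 (Fintype.card V) : ℕ) : ℝ) := hcast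
        _ = (12 * ℓ : ℝ) * ((Nat.log 2 (Fintype.card V) : ℕ) : ℝ) := by push_cast; ring
        _ ≤ (12 * ℓ : ℝ) * Real.logb 2 (Fintype.card V) := by
            apply mul_le_mul_of_nonneg_left hlog (by positivity)
        _ ≤ (12 * ℓ + 1 : ℝ) * Real.logb 2 (Fintype.card V) := by
            apply mul_le_mul_of_nonneg_right (by linarith) hlogb_nonneg
    exact ⟨⟨6 * ℓ * (Nat.log 2 (Fintype.card V) + 1), hs, hbound⟩,
      ⟨6 * ℓ * (Nat.log 2 (Fintype.card V) + 1), hq, hbound⟩⟩
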